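/- arXiv:1503.00134 — 3 statements merged into one kernel-verified Lean document; each statement's English description precedes it below -/
import Mathlib

section
/- The map φ̂(x,y) = (y/(1+x), y(1+x+y)/(x(1+x)²)) on ℝ₊² is conjugate to ψ(x,y) = (y, y/x) via Π̃(x,y) = (x, y/(1+x)); that is, Π̃ ∘ φ̂ = ψ ∘ Π̃ and Π̃ is a bijection of ℝ₊². -/
def Qpos : Set (ℝ × ℝ) := {p | 0 < p.1 ∧ 0 < p.2}

/-- Reduced map of dP₃. -/
noncomputable def phiHat : ℝ × ℝ → ℝ × ℝ :=
  fun p => (p.2 / (1 + p.1), p.2 * (1 + p.1 + p.2) / (p.1 * (1 + p.1) ^ 2))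

noncomputable def psi6 : ℝ × ℝ → ℝ × ℝ := fun p => (p.2, p.2 / p.1)

noncomputable def PiTilde : ℝ × ℝ → ℝ × ℝ := fun p => (p.1, p.2 / (1 + p.1))

theorem phiHat_conjugate_psi6 :
    (∀ p ∈ Qpos, PiTilde (phiHat p) = psi6 (PiTilde p)) ∧
    Set.BijOn PiTilde Qpos Qpos := by
  constructor
  · rintro ⟨x, y⟩ ⟨hx, hy⟩
    simp only [PiTilde, phiHat, psi6, Prod.mk.injEq]
    have h1 : (0:ℝ) < 1 + x := by linarith
    have h2 : (0:ℝ) < 1 + x + y := by linarith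
    refine ⟨trivial, ?_⟩
    field_simp
  · have hmaps : Set.MapsTo PiTilde Qpos Qpos := by
      rintro ⟨x, y⟩ ⟨hx, hy⟩
      exact ⟨hx, div_pos hy (by linarith)⟩
    refine ⟨hmaps, ?_, ?_⟩
    · rintro ⟨x, y⟩ ⟨hx, hy⟩ ⟨x', y'⟩ ⟨hx', hy'⟩ h
      simp only [PiTilde, Prod.mk.injEq] at h
      obtain ⟨h1, h2⟩ := h
      subst h1
      have : (1:ℝ) + x ≠ 0 := by linarith
      field_simp at h2
      simp_all
    · rintro ⟨x, y⟩ ⟨hx, hy⟩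
      refine ⟨(x, y * (1 + x)), ⟨hx, mul_pos hy (by linarith)⟩, ?_⟩
      simp only [PiTilde]
      have : (1:ℝ) + x ≠ 0 := by linarith
      field_simp
end

section
/- The map φ̂(x,y) = (y/(1+x), y(1+x+y)/(x(1+x)²)) on ℝ₊² is globally 6-periodic: its sixth iterate is the identity on ℝ₊². -/
theorem phiHat_six_periodic : ∀ p ∈ Qpos, phiHat^[6] p = p := by
  rintro ⟨x, y⟩ ⟨hx, hy⟩
  simp only [Qpos, Set.mem_setOf_eq] at hx hy ⊢
  have hx' : x ≠ 0 := ne_of_gt hx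
  have hy' : y ≠ 0 := ne_of_gt hy
  have h1 : (1 : ℝ) + x ≠ 0 := by positivity
  have ht : (1 : ℝ) + x + y ≠ 0 := by positivity
  have hq : x * (1 + x) + y ≠ 0 := by positivity
  have e1 : phiHat (x, y) = (y / (1 + x), y * (1 + x + y) / (x * (1 + x) ^ 2)) := rfl
  have e2 : phiHat (y / (1 + x), y * (1 + x + y) / (x * (1 + x) ^ 2))
      = (y / (x * (1 + x)), (x * (1 + x) + y) / (x ^ 2 * (1 + x))) := by
    simp only [phiHat, Prod.mk.injEq]
    constructor <;> field_simp
  have e3 : phiHat (y / (x * (1 + x)), (x * (1 + x) + y) / (x ^ 2 * (1 + x)))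
      = (1 / x, (1 + x) ^ 2 / (x * y)) := by
    simp only [phiHat, Prod.mk.injEq]
    constructor
    · field_simp
    · field_simp; ring
  have e4 : phiHat (1 / x, (1 + x) ^ 2 / (x * y))
      = ((1 + x) / y, x * (1 + x) * (1 + x + y) / y ^ 2) := by
    simp only [phiHat, Prod.mk.injEq]
    constructor <;> (field_simp; ring)
  have e5 : phiHat ((1 + x) / y, x * (1 + x) * (1 + x + y) / y ^ 2)
      = (x * (1 + x) / y, x * (x * (1 + x) + y) / y) := by
    simp only [phiHat, Prod.mk.injEq]
    constructor <;> (field_simp; ring)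
  have e6 : phiHat (x * (1 + x) / y, x * (x * (1 + x) + y) / y) = (x, y) := by
    simp only [phiHat, Prod.mk.injEq]
    constructor <;> (field_simp; try ring) <;> tauto
  show phiHat (phiHat (phiHat (phiHat (phiHat (phiHat (x, y)))))) = (x, y)
  rw [e1, e2, e3, e4, e5, e6]
end

section
/- Let C_{(1,1)} = {x ∈ ℝ₊⁶ : x₄ = x₃x₅/x₂, x₆ = 2x₂x₅/x₁}, which is invariant under the dP₃ map φ. Then Ī₁(x) = x₂/x₃ + x₃/x₂ and Ī₂(x) = 2x₂²/(x₁x₅) + x₁x₅/x₂² are first integrals of the restriction of φ to C_{(1,1)}: Ī_k(φ(x)) = Ī_k(x) for all x ∈ C_{(1,1)}. -/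
noncomputable def phiDP3 : ℝ × ℝ × ℝ × ℝ × ℝ × ℝ → ℝ × ℝ × ℝ × ℝ × ℝ × ℝ :=
  fun x =>
    match x with
    | (x1, x2, x3, x4, x5, x6) =>
      (x3, x4, x5, x6, (x2 * x4 + x3 * x5) / x1,
        (x1 * x4 * x6 + x2 * x4 * x5 + x3 * x5 ^ 2) / (x1 * x2))

/-- The fiber C₍₁,₁₎ for the dP₃ map. -/
def C11 : Set (ℝ × ℝ × ℝ × ℝ × ℝ × ℝ) :=
  {x | (0 < x.1 ∧ 0 < x.2.1 ∧ 0 < x.2.2.1 ∧ 0 < x.2.2.2.1 ∧ 0 < x.2.2.2.2.1 ∧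
        0 < x.2.2.2.2.2) ∧
    x.2.2.2.1 = x.2.2.1 * x.2.2.2.2.1 / x.2.1 ∧
    x.2.2.2.2.2 = 2 * x.2.1 * x.2.2.2.2.1 / x.1}

noncomputable def Ibar1 : ℝ × ℝ × ℝ × ℝ × ℝ × ℝ → ℝ :=
  fun x => x.2.1 / x.2.2.1 + x.2.2.1 / x.2.1

noncomputable def Ibar2 : ℝ × ℝ × ℝ × ℝ × ℝ × ℝ → ℝ :=
  fun x => 2 * x.2.1 ^ 2 / (x.1 * x.2.2.2.2.1) + x.1 * x.2.2.2.2.1 / x.2.1 ^ 2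

theorem first_integrals_on_C11 :
    (∀ x ∈ C11, phiDP3 x ∈ C11) ∧
    (∀ x ∈ C11, Ibar1 (phiDP3 x) = Ibar1 x ∧ Ibar2 (phiDP3 x) = Ibar2 x) := by
  constructor
  · rintro ⟨x1, x2, x3, x4, x5, x6⟩ ⟨⟨h1, h2, h3, h4, h5, h6⟩, e4, e6⟩
    simp only [C11, phiDP3, Set.mem_setOf_eq] at *
    have n1 := h1.ne'
    have n2 := h2.ne'
    have n3 := h3.ne'
    have n4 := h4.ne'
    have n5 := h5.ne'
    subst e4 e6
    refine ⟨⟨h3, h4, h5, h6, ?_, ?_⟩, ?_, ?_⟩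
    · positivity
    · positivity
    · field_simp
      ring
    · field_simp
      ring
  · rintro ⟨x1, x2, x3, x4, x5, x6⟩ ⟨⟨h1, h2, h3, h4, h5, h6⟩, e4, e6⟩
    simp only [Ibar1, Ibar2, phiDP3] at *
    have n1 := h1.ne'
    have n2 := h2.ne'
    have n3 := h3.ne'
    have n5 := h5.ne'
    subst e4 e6
    constructor
    · field_simp
      ring
    · field_simp
      ring
end
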